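/- Let (X,R) be a commutative word rewriting system with X totally ordered, Σ²(X,R) its associated 2-polygraph, and π the surjective functor from the free category on G(Σ²(X,R)) to the free category on G(X,R) determined by π(u ⊗ τ_{x,y} ⊗ v) = id_{π(u)+x+y+π(v)} and π(u ⊗ α ⊗ v) = (π(u)+π(v), α). If p and q are parallel paths in G(Σ²(X,R)) with p ≡₀₁ q, where ≡₀₁ is the exchange congruence, then π(p) ≡_{(X,R)} π(q). Consequently π induces a functor between the quotient categories by these congruences. -/

import Mathlib

universe u u' v v'

/-- Paths in a graph given by a family of arrow types `Hom`. -/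
inductive GPath {Obj : Type u} (Hom : Obj → Obj → Type v) : Obj → Obj → Type (max u v)
  | nil {a : Obj} : GPath Hom a a
  | cons {a b c : Obj} (f : Hom a b) (p : GPath Hom b c) : GPath Hom a c

/-- Composition (concatenation) of paths. -/
def GPath.comp {Obj : Type u} {Hom : Obj → Obj → Type v} :
    ∀ {a b c : Obj}, GPath Hom a b → GPath Hom b c → GPath Hom a c
  | _, _, _, .nil, q => q
  | _, _, _, .cons f p, q => .cons f (p.comp q)

/-- A commutative word rewriting system with alphabet `X` and rules indexed by `A`. -/
structure CWRS (X A : Type) where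
  src : A → X →₀ ℕ
  tgt : A → X →₀ ℕ

/-- The canonical projection `π : X* → [X]`, sending a word to the sum of its letters. -/
noncomputable def pi {X : Type} [DecidableEq X] (u : List X) : X →₀ ℕ :=
  Multiset.toFinsupp (u : Multiset X)

theorem pi_append {X : Type} [DecidableEq X] (u v : List X) :
    pi (u ++ v) = pi u + pi v := by
  simp only [pi]
  rw [← Multiset.coe_add, map_add]

/-- The canonical representative word `ā ∈ X*` of `a ∈ [X]`. -/
noncomputable def bar {X : Type} [LinearOrder X] (a : X →₀ ℕ) : List X :=
  (Finsupp.toMultiset a).sort (· ≤ ·)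

theorem pi_bar {X : Type} [LinearOrder X] (a : X →₀ ℕ) : pi (bar a) = a := by
  simp [pi, bar]

/-- The 2-cells of the 2-polygraph `Σ²(X,R)`. -/
inductive Cell2 (X A : Type)
  | tau (x y : X) (h : x ≠ y)
  | rule (α : A)

/-- The 1-source of a 2-cell. -/
noncomputable def src1 {X A : Type} [LinearOrder X] (S : CWRS X A) : Cell2 X A → List X
  | .tau x y _ => [x, y]
  | .rule α => bar (S.src α)

/-- The 1-target of a 2-cell. -/
noncomputable def tgt1 {X A : Type} [LinearOrder X] (S : CWRS X A) : Cell2 X A → List X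
  | .tau x y _ => [y, x]
  | .rule α => bar (S.tgt α)

/-- Arrows of the reduction graph `G(Σ²(X,R))` from the word `u` to the word `v`. -/
def PolyStep {X A : Type} [LinearOrder X] (S : CWRS X A) (u v : List X) : Type :=
  {t : List X × Cell2 X A × List X //
    u = t.1 ++ src1 S t.2.1 ++ t.2.2 ∧ v = t.1 ++ tgt1 S t.2.1 ++ t.2.2}

/-- Arrows of the reduction graph `G(X,R)` from `a` to `b`. -/
def CwrsStep {X A : Type} (S : CWRS X A) (a b : X →₀ ℕ) : Type :=
  {p : (X →₀ ℕ) × A // a = p.1 + S.src p.2 ∧ b = p.1 + S.tgt p.2}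

/-- The congruence `≡_{(X,R)}` on parallel paths of `G(X,R)`. -/
inductive CwrsCong {X A : Type} (S : CWRS X A) :
    ∀ {a b : X →₀ ℕ}, GPath (CwrsStep S) a b → GPath (CwrsStep S) a b → Prop
  | square {a m₁ m₂ b : X →₀ ℕ} (c : X →₀ ℕ) (α β : A)
      (f₁ : CwrsStep S a m₁) (g₁ : CwrsStep S m₁ b)
      (f₂ : CwrsStep S a m₂) (g₂ : CwrsStep S m₂ b)
      (hf₁ : f₁.1 = (c + S.src β, α)) (hg₁ : g₁.1 = (c + S.tgt α, β))
      (hf₂ : f₂.1 = (c + S.src α, β)) (hg₂ : g₂.1 = (c + S.tgt β, α)) :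
      CwrsCong S (.cons f₁ (.cons g₁ .nil)) (.cons f₂ (.cons g₂ .nil))
  | refl {a b : X →₀ ℕ} (p : GPath (CwrsStep S) a b) : CwrsCong S p p
  | symm {a b : X →₀ ℕ} {p q : GPath (CwrsStep S) a b} :
      CwrsCong S p q → CwrsCong S q p
  | trans {a b : X →₀ ℕ} {p q r : GPath (CwrsStep S) a b} :
      CwrsCong S p q → CwrsCong S q r → CwrsCong S p r
  | comp {a b c : X →₀ ℕ} {p p' : GPath (CwrsStep S) a b} {q q' : GPath (CwrsStep S) b c} :
      CwrsCong S p p' → CwrsCong S q q' → CwrsCong S (p.comp q) (p'.comp q')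

/-- The exchange congruence `≡₀₁` on parallel paths of `G(Σ²(X,R))`: the
smallest equivalence relation, compatible with path composition, identifying
for all 2-cells `φ`, `ψ` and all words `u`, `v`, `w` the path
`u ⊗ φ ⊗ (v ⊗ s₁(ψ) ⊗ w)` followed by `(u ⊗ t₁(φ) ⊗ v) ⊗ ψ ⊗ w`
with the path `(u ⊗ s₁(φ) ⊗ v) ⊗ ψ ⊗ w` followed by `u ⊗ φ ⊗ (v ⊗ t₁(ψ) ⊗ w)`. -/
inductive Exch {X A : Type} [LinearOrder X] (S : CWRS X A) :
    ∀ {u v : List X}, GPath (PolyStep S) u v → GPath (PolyStep S) u v → Prop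
  | exchange {a m₁ m₂ b : List X} (u v w : List X) (φ ψ : Cell2 X A)
      (f₁ : PolyStep S a m₁) (g₁ : PolyStep S m₁ b)
      (f₂ : PolyStep S a m₂) (g₂ : PolyStep S m₂ b)
      (hf₁ : f₁.1 = (u, φ, v ++ src1 S ψ ++ w))
      (hg₁ : g₁.1 = (u ++ tgt1 S φ ++ v, ψ, w))
      (hf₂ : f₂.1 = (u ++ src1 S φ ++ v, ψ, w))
      (hg₂ : g₂.1 = (u, φ, v ++ tgt1 S ψ ++ w)) :
      Exch S (.cons f₁ (.cons g₁ .nil)) (.cons f₂ (.cons g₂ .nil))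
  | refl {u v : List X} (p : GPath (PolyStep S) u v) : Exch S p p
  | symm {u v : List X} {p q : GPath (PolyStep S) u v} : Exch S p q → Exch S q p
  | trans {u v : List X} {p q r : GPath (PolyStep S) u v} :
      Exch S p q → Exch S q r → Exch S p r
  | comp {u v w : List X} {p p' : GPath (PolyStep S) u v} {q q' : GPath (PolyStep S) v w} :
      Exch S p p' → Exch S q q' → Exch S (p.comp q) (p'.comp q')

/-- The value of the functor `π` on a generating arrow of `G(Σ²(X,R))`:
an arrow `u ⊗ τ_{x,y} ⊗ v` is sent to the identity (empty) path at
`π(u)+x+y+π(v)`, and an arrow `u ⊗ α ⊗ v` (for `α` a rule) is sent to the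
one-step path given by the arrow `(π(u)+π(v), α)` of `G(X,R)`. -/
noncomputable def piStep {X A : Type} [LinearOrder X] (S : CWRS X A) {u v : List X}
    (f : PolyStep S u v) : GPath (CwrsStep S) (pi u) (pi v) := by
  obtain ⟨⟨h, φ, k⟩, h1, h2⟩ := f
  cases φ with
  | tau x y hxy =>
    have key : pi v = pi u := by
      subst h1; subst h2
      simp only [src1, tgt1, pi_append]
      have : pi [y, x] = pi [x, y] := by
        simp only [pi]
        congr 1
        exact Multiset.coe_eq_coe.mpr (List.Perm.swap x y [])
      rw [this]
    rw [key]
    exact .nil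
  | rule α =>
    refine .cons (⟨(pi h + pi k, α), ?_, ?_⟩ : CwrsStep S (pi u) (pi v)) .nil
    · subst h1
      simp only [src1, pi_append, pi_bar]
      abel
    · subst h2
      simp only [tgt1, pi_append, pi_bar]
      abel

/-- The functor `π` from the free category on `G(Σ²(X,R))` to the free category
on `G(X,R)`, on paths. -/
noncomputable def piPath {X A : Type} [LinearOrder X] (S : CWRS X A) :
    ∀ {u v : List X}, GPath (PolyStep S) u v → GPath (CwrsStep S) (pi u) (pi v)
  | _, _, .nil => .nil
  | _, _, .cons f p => (piStep S f).comp (piPath S p)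


section Aux
variable {Obj : Type u} {Hom : Obj → Obj → Type v}

theorem GPath.comp_nil {a b : Obj} (p : GPath Hom a b) : p.comp .nil = p := by
  induction p with
  | nil => rfl
  | cons f p ih => simp [GPath.comp, ih]

theorem GPath.comp_assoc {a b c d : Obj} (p : GPath Hom a b) (q : GPath Hom b c)
    (r : GPath Hom c d) : (p.comp q).comp r = p.comp (q.comp r) := by
  induction p with
  | nil => rfl
  | cons f p ih => simp [GPath.comp, ih]
end Aux

theorem piPath_comp {X A : Type} [LinearOrder X] (S : CWRS X A) {u v w : List X}
    (p : GPath (PolyStep S) u v) (q : GPath (PolyStep S) v w) :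
    piPath S (p.comp q) = (piPath S p).comp (piPath S q) := by
  induction p with
  | nil => rfl
  | cons f p ih => simp [GPath.comp, piPath, ih, GPath.comp_assoc]

theorem heq_mpr {α β : Sort u} (h : α = β) (b : β) : HEq (h.mpr b) b := by
  subst h; rfl

theorem piStep_tau {X A : Type} [LinearOrder X] (S : CWRS X A) {u v : List X}
    (f : PolyStep S u v) (x y : X) (hxy : x ≠ y) (hf : f.1.2.1 = Cell2.tau x y hxy) :
    pi u = pi v ∧ HEq (piStep S f) (GPath.nil : GPath (CwrsStep S) (pi u) (pi u)) := by
  obtain ⟨⟨h, φ, k⟩, h1, h2⟩ := f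
  simp only at hf
  subst hf
  subst h1; subst h2
  constructor
  · have : pi [x,y] = pi [y,x] := by
      simp only [pi]; congr 1
      exact Multiset.coe_eq_coe.mpr (List.Perm.swap y x [])
    simp only [src1, tgt1, pi_append, this]
  · simp only [piStep]
    exact heq_mpr _ _

theorem piStep_rule {X A : Type} [LinearOrder X] (S : CWRS X A) {u v : List X}
    (f : PolyStep S u v) (α : A) (hf : f.1.2.1 = Cell2.rule α) :
    ∃ s : CwrsStep S (pi u) (pi v), s.1 = (pi f.1.1 + pi f.1.2.2, α) ∧
      piStep S f = .cons s .nil := by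
  obtain ⟨⟨h, φ, k⟩, h1, h2⟩ := f
  simp only at hf
  subst hf
  subst h1; subst h2
  refine ⟨⟨(pi h + pi k, α), ?_, ?_⟩, rfl, rfl⟩
  · simp only [src1, pi_append, pi_bar]; abel
  · simp only [tgt1, pi_append, pi_bar]; abel

theorem pi_pair_comm {X : Type} [LinearOrder X] (x y : X) : pi [x, y] = pi [y, x] := by
  simp only [pi]; congr 1
  exact Multiset.coe_eq_coe.mpr (List.Perm.swap y x [])

theorem cwrsStep_heq {X A : Type} (S : CWRS X A) {a b a' b' : X →₀ ℕ} (e : a = a')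
    (e' : b = b') (s : CwrsStep S a b) (s' : CwrsStep S a' b') (h : s.1 = s'.1) :
    HEq s s' := by
  subst e; subst e'; exact heq_of_eq (Subtype.ext h)

theorem master_tt {Obj : Type u} {Hom : Obj → Obj → Type v} {a m₁ m₂ b : Obj}
    (p₁ : GPath Hom a m₁) (q₁ : GPath Hom m₁ b) (p₂ : GPath Hom a m₂) (q₂ : GPath Hom m₂ b)
    (e₁ : a = m₁) (e₂ : m₁ = b) (e₃ : a = m₂)
    (h₁ : HEq p₁ (GPath.nil : GPath Hom a a)) (h₂ : HEq q₁ (GPath.nil : GPath Hom m₁ m₁))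
    (h₃ : HEq p₂ (GPath.nil : GPath Hom a a)) (h₄ : HEq q₂ (GPath.nil : GPath Hom m₂ m₂)) :
    p₁.comp q₁ = p₂.comp q₂ := by
  subst e₂; subst e₁; subst e₃
  rw [eq_of_heq h₁, eq_of_heq h₂, eq_of_heq h₃, eq_of_heq h₄]

theorem master_tr {Obj : Type u} {Hom : Obj → Obj → Type v} {a m₁ m₂ b : Obj}
    (p₁ : GPath Hom a m₁) (t₁ : Hom m₁ b) (s₂ : Hom a m₂) (q₂ : GPath Hom m₂ b)
    (e₁ : a = m₁) (e₂ : m₂ = b)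
    (h₁ : HEq p₁ (GPath.nil : GPath Hom a a)) (h₂ : HEq q₂ (GPath.nil : GPath Hom m₂ m₂))
    (hts : HEq t₁ s₂) :
    p₁.comp (.cons t₁ .nil) = (GPath.cons s₂ .nil).comp q₂ := by
  subst e₁; subst e₂
  rw [eq_of_heq h₁, eq_of_heq h₂, eq_of_heq hts]
  rfl

theorem main_lemma {X A : Type} [LinearOrder X] (S : CWRS X A) :
    ∀ {u v : List X} (p q : GPath (PolyStep S) u v),
      Exch S p q → CwrsCong S (piPath S p) (piPath S q) := by
  intro u v p q h
  induction h with
  | refl p => exact .refl _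
  | symm _ ih => exact .symm ih
  | trans _ _ ih1 ih2 => exact .trans ih1 ih2
  | comp _ _ ih1 ih2 => rw [piPath_comp, piPath_comp]; exact .comp ih1 ih2
  | exchange u v w φ ψ f₁ g₁ f₂ g₂ hf₁ hg₁ hf₂ hg₂ =>
    have c₁ : f₁.1.2.1 = φ := by rw [hf₁]
    have c₂ : g₁.1.2.1 = ψ := by rw [hg₁]
    have c₃ : f₂.1.2.1 = ψ := by rw [hf₂]
    have c₄ : g₂.1.2.1 = φ := by rw [hg₂]
    simp only [piPath, GPath.comp_nil]
    cases φ with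
    | tau x y hxy =>
      obtain ⟨e₁, h₁⟩ := piStep_tau S f₁ _ _ _ c₁
      obtain ⟨e₄, h₄⟩ := piStep_tau S g₂ _ _ _ c₄
      cases ψ with
      | tau x' y' hxy' =>
        obtain ⟨e₂, h₂⟩ := piStep_tau S g₁ _ _ _ c₂
        obtain ⟨e₃, h₃⟩ := piStep_tau S f₂ _ _ _ c₃
        rw [master_tt _ _ _ _ e₁ e₂ e₃ h₁ h₂ h₃ h₄]
        exact .refl _
      | rule β =>
        obtain ⟨t₁, ht₁, hpt₁⟩ := piStep_rule S g₁ _ c₂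
        obtain ⟨s₂, hs₂, hps₂⟩ := piStep_rule S f₂ _ c₃
        simp only [hg₁] at ht₁
        simp only [hf₂] at hs₂
        have hts : HEq t₁ s₂ := by
          refine cwrsStep_heq S e₁.symm e₄.symm _ _ ?_
          rw [ht₁, hs₂]
          simp only [tgt1, src1, pi_append, pi_pair_comm x y]
        rw [hpt₁, hps₂, master_tr _ _ _ _ e₁ e₄ h₁ h₄ hts]
        exact .refl _
    | rule α =>
      obtain ⟨s₁, hs₁, hps₁⟩ := piStep_rule S f₁ _ c₁
      obtain ⟨t₂, ht₂, hpt₂⟩ := piStep_rule S g₂ _ c₄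
      simp only [hf₁] at hs₁
      simp only [hg₂] at ht₂
      cases ψ with
      | tau x' y' hxy' =>
        obtain ⟨e₂, h₂⟩ := piStep_tau S g₁ _ _ _ c₂
        obtain ⟨e₃, h₃⟩ := piStep_tau S f₂ _ _ _ c₃
        have hts : HEq t₂ s₁ := by
          refine cwrsStep_heq S e₃.symm e₂.symm _ _ ?_
          rw [ht₂, hs₁]
          simp only [tgt1, src1, pi_append, pi_pair_comm x' y']
        rw [hps₁, hpt₂, ← master_tr _ _ _ _ e₃ e₂ h₃ h₂ hts]
        exact .refl _
      | rule β =>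
        obtain ⟨t₁, ht₁, hpt₁⟩ := piStep_rule S g₁ _ c₂
        obtain ⟨s₂, hs₂, hps₂⟩ := piStep_rule S f₂ _ c₃
        simp only [hg₁] at ht₁
        simp only [hf₂] at hs₂
        rw [hps₁, hpt₁, hps₂, hpt₂]
        refine CwrsCong.square (pi u + pi v + pi w) α β s₁ t₁ s₂ t₂ ?_ ?_ ?_ ?_
        · rw [hs₁]; simp only [src1, pi_append, pi_bar, Prod.mk.injEq]
          refine ⟨by abel, trivial⟩
        · rw [ht₁]; simp only [tgt1, pi_append, pi_bar, Prod.mk.injEq]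
          refine ⟨by abel, trivial⟩
        · rw [hs₂]; simp only [src1, pi_append, pi_bar, Prod.mk.injEq]
          refine ⟨by abel, trivial⟩
        · rw [ht₂]; simp only [tgt1, pi_append, pi_bar, Prod.mk.injEq]
          refine ⟨by abel, trivial⟩

/-- If `p` and `q` are parallel paths of `G(Σ²(X,R))` identified by the exchange
congruence `≡₀₁`, then their images under the functor `π` are identified by the
congruence `≡_{(X,R)}`; consequently `π` induces a map between the quotients of
the hom-sets of the free categories by these congruences (hence a functor
between the quotient categories). -/
theorem pi_preserves_cong {X A : Type} [LinearOrder X] (S : CWRS X A) :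
    (∀ {u v : List X} (p q : GPath (PolyStep S) u v),
      Exch S p q → CwrsCong S (piPath S p) (piPath S q)) ∧
    ∃ Pibar : ∀ u v : List X,
        Quot (fun p q : GPath (PolyStep S) u v => Exch S p q) →
        Quot (fun p q : GPath (CwrsStep S) (pi u) (pi v) => CwrsCong S p q),
      ∀ (u v : List X) (p : GPath (PolyStep S) u v),
        Pibar u v (Quot.mk _ p) = Quot.mk _ (piPath S p) := by
  refine ⟨fun p q h => main_lemma S p q h,
    fun u v => Quot.map (piPath S) (fun p q h => main_lemma S p q h),
    fun u v p => rfl⟩
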